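/- Let i_n(123) be the number of 123-avoiding involutions of length n with a unique longest increasing subsequence. Then i_1(123) = 1, i_n(123) = 1 whenever n ≥ 2 is even, and i_n(123) = 0 whenever n ≥ 3 is odd. -/

import Mathlib

/-- `s` is the index set of an increasing subsequence of the word `f`. -/
def IsIncSubseq {n : ℕ} {α : Type*} [Preorder α] (f : Fin n → α) (s : Finset (Fin n)) : Prop :=
  ∀ i ∈ s, ∀ j ∈ s, i < j → f i < f j

/-- `f` has a unique longest increasing subsequence. -/
def HasULIS {n : ℕ} {α : Type*} [Preorder α] (f : Fin n → α) : Prop :=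
  ∃! s : Finset (Fin n), IsIncSubseq f s ∧
    ∀ t : Finset (Fin n), IsIncSubseq f t → t.card ≤ s.card

/-- `p` contains the pattern `q`. -/
def Contains {k n : ℕ} (q : Equiv.Perm (Fin k)) (p : Equiv.Perm (Fin n)) : Prop :=
  ∃ f : Fin k → Fin n, StrictMono f ∧ ∀ a b : Fin k, p (f a) < p (f b) ↔ q a < q b

/-- `p` avoids the pattern `q`. -/
def Avoids {k n : ℕ} (q : Equiv.Perm (Fin k)) (p : Equiv.Perm (Fin n)) : Prop :=
  ¬ Contains q p

def pattern321 : Equiv.Perm (Fin 3) := ⟨![2,1,0], ![2,1,0], by decide, by decide⟩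
def pattern231 : Equiv.Perm (Fin 3) := ⟨![1,2,0], ![2,0,1], by decide, by decide⟩
def pattern132 : Equiv.Perm (Fin 3) := ⟨![0,2,1], ![0,2,1], by decide, by decide⟩
def pattern123 : Equiv.Perm (Fin 3) := Equiv.refl (Fin 3)

/-- the number of `q`-avoiding permutations of length `n` with a unique
longest increasing subsequence. -/
noncomputable def uNum {k : ℕ} (q : Equiv.Perm (Fin k)) (n : ℕ) : ℕ :=
  Nat.card {p : Equiv.Perm (Fin n) // Avoids q p ∧ HasULIS ⇑p}

/-- the number of `q`-avoiding involutions of length `n` with a unique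
longest increasing subsequence. -/
noncomputable def iNum {k : ℕ} (q : Equiv.Perm (Fin k)) (n : ℕ) : ℕ :=
  Nat.card {p : Equiv.Perm (Fin n) // p⁻¹ = p ∧ Avoids q p ∧ HasULIS ⇑p}

/-- A permutation is indecomposable if it cannot be cut into a (nonempty) prefix and
a (nonempty) suffix so that every entry of the prefix is smaller than every entry
of the suffix. -/
def Indecomposable {m : ℕ} (w : Equiv.Perm (Fin m)) : Prop :=
  ¬ ∃ j : ℕ, 1 ≤ j ∧ j < m ∧ ∀ a b : Fin m, (a : ℕ) < j → j ≤ (b : ℕ) → w a < w b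

namespace I123

variable {n : ℕ}

lemma contains_of_triple {p : Equiv.Perm (Fin n)} {i j k : Fin n}
    (hij : i < j) (hjk : j < k) (h1 : p i < p j) (h2 : p j < p k) :
    Contains pattern123 p := by
  refine ⟨fun a => if a.val = 0 then i else if a.val = 1 then j else k, ?_, ?_⟩
  · rintro ⟨av, hav⟩ ⟨bv, hbv⟩ hab
    rw [Fin.lt_def] at hab
    simp only at hab
    interval_cases av <;> interval_cases bv <;> simp only [reduceIte] <;>
      first
        | exact hij | exact hjk | exact hij.trans hjk
        | (exfalso; omega)
  · rintro ⟨av, hav⟩ ⟨bv, hbv⟩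
    interval_cases av <;> interval_cases bv <;>
      simp only [pattern123, Equiv.refl_apply, Fin.lt_def, reduceIte] <;>
      first
        | simpa using h1 | simpa using h2 | simpa using h1.trans h2
        | simpa using h1.asymm | simpa using h2.asymm
        | simpa using (h1.trans h2).asymm
        | simp

lemma three_ordered {s : Finset (Fin n)} (h : 2 < s.card) :
    ∃ i ∈ s, ∃ j ∈ s, ∃ k ∈ s, i < j ∧ j < k := by
  obtain ⟨a, b, c, ha, hb, hc, hab, hac, hbc⟩ := Finset.two_lt_card_iff.mp h
  rcases lt_or_gt_of_ne hab with h1 | h1 <;>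
  rcases lt_or_gt_of_ne hac with h2 | h2 <;>
  rcases lt_or_gt_of_ne hbc with h3 | h3
  · exact ⟨a, ha, b, hb, c, hc, h1, h3⟩
  · exact ⟨a, ha, c, hc, b, hb, h2, h3⟩
  · exact absurd ((h2.trans h1).trans h3) (lt_irrefl c)
  · exact ⟨c, hc, a, ha, b, hb, h2, h1⟩
  · exact ⟨b, hb, a, ha, c, hc, h1, h2⟩
  · exact absurd ((h3.trans h1).trans h2) (lt_irrefl c)
  · exact ⟨b, hb, c, hc, a, ha, h3, h2⟩
  · exact ⟨c, hc, b, hb, a, ha, h3, h1⟩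

lemma card_le_two {p : Equiv.Perm (Fin n)} (hav : Avoids pattern123 p)
    {t : Finset (Fin n)} (ht : IsIncSubseq ⇑p t) : t.card ≤ 2 := by
  by_contra hc
  obtain ⟨i, hi, j, hj, k, hk, hij, hjk⟩ := three_ordered (lt_of_not_ge hc)
  exact hav (contains_of_triple hij hjk (ht i hi j hj hij) (ht j hj k hk hjk))

lemma pair_inc {p : Equiv.Perm (Fin n)} {a b : Fin n} (hab : a < b) (hpab : p a < p b) :
    IsIncSubseq ⇑p {a, b} := by
  intro i hi j hj hij
  simp only [Finset.mem_insert, Finset.mem_singleton] at hi hj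
  rcases hi with rfl | rfl <;> rcases hj with rfl | rfl
  · exact absurd hij (lt_irrefl _)
  · exact hpab
  · exact absurd (hij.trans hab) (lt_irrefl _)
  · exact absurd hij (lt_irrefl _)

lemma pair_eq_pair {a b c d : Fin n} (hab : a < b) (hcd : c < d)
    (h : ({a, b} : Finset (Fin n)) = {c, d}) : a = c ∧ b = d := by
  have ha : a = c ∨ a = d := by
    have : a ∈ ({c, d} : Finset (Fin n)) := by rw [← h]; simp
    simpa using this
  have hb : b = c ∨ b = d := by
    have : b ∈ ({c, d} : Finset (Fin n)) := by rw [← h]; simp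
    simpa using this
  have hv : (a : ℕ) = c ∧ (b : ℕ) = d := by
    rw [Fin.lt_def] at hab hcd
    rcases ha with h1 | h1 <;> rcases hb with h2 | h2 <;>
      rw [Fin.ext_iff] at h1 h2 <;> omega
  exact ⟨Fin.ext hv.1, Fin.ext hv.2⟩

end I123

namespace I123

lemma ulis_forward (hn : 2 ≤ n) {p : Equiv.Perm (Fin n)} (hav : Avoids pattern123 p)
    (hu : HasULIS ⇑p) : ∃! x : Fin n × Fin n, x.1 < x.2 ∧ p x.1 < p x.2 := by
  obtain ⟨s, ⟨hs, hsmax⟩, huniq⟩ := hu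
  -- there is some non-inversion pair
  have hex : ∃ x : Fin n × Fin n, x.1 < x.2 ∧ p x.1 < p x.2 := by
    by_contra hno
    push_neg at hno
    have h1 : ∀ t : Finset (Fin n), IsIncSubseq ⇑p t → t.card ≤ 1 := by
      intro t ht
      by_contra hc
      obtain ⟨i, hi, j, hj, hij⟩ := Finset.one_lt_card.mp (lt_of_not_ge hc)
      rcases lt_or_gt_of_ne hij with h | h
      · exact absurd (ht i hi j hj h) (not_lt.mpr (hno (i, j) h))
      · exact absurd (ht j hj i hi h) (not_lt.mpr (hno (j, i) h))
    have hone : ∀ a : Fin n, ({a} : Finset (Fin n)) = s := by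
      intro a
      refine huniq {a} ⟨?_, ?_⟩
      · intro i hi j hj hij
        simp only [Finset.mem_singleton] at hi hj
        subst hi; subst hj; exact absurd hij (lt_irrefl _)
      · intro t ht
        simpa using h1 t ht
    have h01 : (⟨0, by omega⟩ : Fin n) = ⟨1, by omega⟩ := by
      have := (hone ⟨0, by omega⟩).trans (hone ⟨1, by omega⟩).symm
      simpa using this
    simp [Fin.ext_iff] at h01
  obtain ⟨⟨a, b⟩, hab, hpab⟩ := hex
  have hcard2 : s.card = 2 := by
    refine le_antisymm (card_le_two hav hs) ?_
    have := hsmax {a, b} (pair_inc hab hpab)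
    rwa [Finset.card_pair hab.ne] at this
  obtain ⟨x, y, hxy, hsxy⟩ : ∃ x y, x < y ∧ s = {x, y} := by
    obtain ⟨x, y, hxy, hsxy⟩ := Finset.card_eq_two.mp hcard2
    rcases lt_or_gt_of_ne hxy with h | h
    · exact ⟨x, y, h, hsxy⟩
    · exact ⟨y, x, h, by rw [hsxy, Finset.pair_comm]⟩
  have hpxy : p x < p y := hs x (by simp [hsxy]) y (by simp [hsxy]) hxy
  refine ⟨(x, y), ⟨hxy, hpxy⟩, ?_⟩
  rintro ⟨c, d⟩ ⟨hcd, hpcd⟩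
  have : ({c, d} : Finset (Fin n)) = s := by
    refine huniq {c, d} ⟨pair_inc hcd hpcd, ?_⟩
    intro t ht
    rw [Finset.card_pair hcd.ne]
    exact card_le_two hav ht
  rw [hsxy] at this
  obtain ⟨h1, h2⟩ := pair_eq_pair hcd hxy this
  exact Prod.ext h1 h2

lemma ulis_backward {p : Equiv.Perm (Fin n)}
    (h : ∃! x : Fin n × Fin n, x.1 < x.2 ∧ p x.1 < p x.2) :
    Avoids pattern123 p ∧ HasULIS ⇑p := by
  obtain ⟨⟨a, b⟩, ⟨hab, hpab⟩, huniq⟩ := h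
  have hav : Avoids pattern123 p := by
    rintro ⟨f, hf, hp⟩
    have h01 : f 0 < f 1 := hf (by decide)
    have h12 : f 1 < f 2 := hf (by decide)
    have hp01 : p (f 0) < p (f 1) := (hp 0 1).mpr (by decide)
    have hp12 : p (f 1) < p (f 2) := (hp 1 2).mpr (by decide)
    have e1 := huniq (f 0, f 1) ⟨h01, hp01⟩
    have e2 := huniq (f 1, f 2) ⟨h12, hp12⟩
    rw [Prod.ext_iff] at e1 e2
    exact hab.ne (e2.1.symm.trans e1.2)
  refine ⟨hav, {a, b}, ⟨pair_inc hab hpab, ?_⟩, ?_⟩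
  · intro t ht
    rw [Finset.card_pair hab.ne]
    exact card_le_two hav ht
  · rintro t ⟨ht, htmax⟩
    have h2 : t.card = 2 := by
      refine le_antisymm (card_le_two hav ht) ?_
      have := htmax {a, b} (pair_inc hab hpab)
      rwa [Finset.card_pair hab.ne] at this
    obtain ⟨x, y, hxy, htxy⟩ : ∃ x y, x < y ∧ t = {x, y} := by
      obtain ⟨x, y, hxy, htxy⟩ := Finset.card_eq_two.mp h2
      rcases lt_or_gt_of_ne hxy with h | h
      · exact ⟨x, y, h, htxy⟩
      · exact ⟨y, x, h, by rw [htxy, Finset.pair_comm]⟩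
    have hpxy : p x < p y := ht x (by simp [htxy]) y (by simp [htxy]) hxy
    have := huniq (x, y) ⟨hxy, hpxy⟩
    rw [Prod.ext_iff] at this
    rw [htxy, show x = a from this.1, show y = b from this.2]

end I123

namespace I123

lemma pos_adj {p : Equiv.Perm (Fin n)} {a b : Fin n} (hab : a < b) (hpab : p a < p b)
    (huniq : ∀ x : Fin n × Fin n, x.1 < x.2 ∧ p x.1 < p x.2 → x = (a, b)) :
    (b : ℕ) = (a : ℕ) + 1 := by
  by_contra hne
  have hlt : (a : ℕ) + 1 < b := by rw [Fin.lt_def] at hab; omega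
  set c : Fin n := ⟨(a : ℕ) + 1, lt_trans hlt b.isLt⟩ with hcdef
  have hac : a < c := by rw [Fin.lt_def]; simp [hcdef]
  have hcb : c < b := by rw [Fin.lt_def]; simpa [hcdef] using hlt
  have h1 : ¬ p a < p c := by
    intro h'
    have := huniq (a, c) ⟨hac, h'⟩
    rw [Prod.ext_iff] at this
    exact hcb.ne (show c = b from this.2)
  have h2 : ¬ p c < p b := by
    intro h'
    have := huniq (c, b) ⟨hcb, h'⟩
    rw [Prod.ext_iff] at this
    exact hac.ne' (show c = a from this.1)
  have hca : p c < p a :=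
    (lt_or_gt_of_ne ((Equiv.injective p).ne hac.ne')).resolve_right h1
  have hbc : p b < p c :=
    (lt_or_gt_of_ne ((Equiv.injective p).ne hcb.ne)).resolve_left h2
  exact absurd ((hbc.trans hca).trans hpab) (lt_irrefl _)

lemma val_adj {p : Equiv.Perm (Fin n)} {a b : Fin n} (hab : a < b) (hpab : p a < p b)
    (huniq : ∀ x : Fin n × Fin n, x.1 < x.2 ∧ p x.1 < p x.2 → x = (a, b)) :
    ((p b : ℕ)) = (p a : ℕ) + 1 := by
  by_contra hne
  have hlt : ((p a : ℕ)) + 1 < p b := by rw [Fin.lt_def] at hpab; omega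
  set v : Fin n := ⟨(p a : ℕ) + 1, lt_trans hlt (p b).isLt⟩ with hvdef
  set c := p.symm v with hcdef
  have hpc : p c = v := p.apply_symm_apply v
  have hva : v ≠ p a := by rw [Ne, Fin.ext_iff]; simp [hvdef]
  have hca : c ≠ a := fun h => hva (hpc.symm.trans (congrArg p h))
  rcases lt_or_gt_of_ne hca with h | h
  · have hpcb : p c < p b := by rw [hpc, Fin.lt_def]; exact hlt
    have := huniq (c, b) ⟨h.trans hab, hpcb⟩
    rw [Prod.ext_iff] at this
    exact h.ne (show c = a from this.1)
  · have hpac : p a < p c := by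
      rw [hpc, Fin.lt_def]; exact Nat.lt_succ_self _
    have := huniq (a, c) ⟨h, hpac⟩
    rw [Prod.ext_iff] at this
    have hcb : c = b := this.2
    rw [hcb] at hpc
    exact hne (congrArg Fin.val hpc)

lemma perm_eq_of_noninv_iff {p q : Equiv.Perm (Fin n)}
    (h : ∀ i j : Fin n, i < j → (p i < p j ↔ q i < q j)) : p = q := by
  have hmono : StrictMono (⇑q ∘ ⇑p.symm) := by
    intro x y hxy
    simp only [Function.comp_apply]
    rcases lt_trichotomy (p.symm x) (p.symm y) with hc | hc | hc
    · refine (h _ _ hc).mp ?_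
      rw [p.apply_symm_apply, p.apply_symm_apply]; exact hxy
    · have : x = y := by
        have := congrArg p hc
        rwa [p.apply_symm_apply, p.apply_symm_apply] at this
      exact absurd this hxy.ne
    · have hnot : ¬ q (p.symm y) < q (p.symm x) := by
        intro h'
        have := (h _ _ hc).mpr h'
        rw [p.apply_symm_apply, p.apply_symm_apply] at this
        exact absurd hxy this.asymm
      have hne : q (p.symm x) ≠ q (p.symm y) :=
        (Equiv.injective q).ne hc.ne'
      exact (lt_or_gt_of_ne hne).resolve_right hnot
  have hrange : Set.range (⇑q ∘ ⇑p.symm) = Set.range (id : Fin n → Fin n) := by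
    rw [Set.range_id]
    exact ((Equiv.surjective q).comp (Equiv.surjective p.symm)).range_eq
  have hid : ⇑q ∘ ⇑p.symm = id := (hmono.range_inj strictMono_id).mp hrange
  refine Equiv.ext fun i => ?_
  have := congrFun hid (p i)
  simp only [Function.comp_apply, Equiv.symm_apply_apply, id_eq] at this
  exact this.symm

end I123

namespace I123

lemma q_noninv {a b : Fin n} (hb : (b : ℕ) = (a : ℕ) + 1)
    {i j : Fin n} (hij : i < j) :
    ((Fin.revPerm * Equiv.swap a b : Equiv.Perm (Fin n)) i <
      (Fin.revPerm * Equiv.swap a b : Equiv.Perm (Fin n)) j ↔ i = a ∧ j = b) := by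
  simp only [Equiv.Perm.mul_apply, Fin.revPerm_apply, Fin.rev_lt_rev]
  have hijv : (i : ℕ) < j := hij
  rcases eq_or_ne i a with hia | hia
  · have hiav : (i : ℕ) = a := congrArg Fin.val hia
    rcases eq_or_ne j b with hjb | hjb
    · rw [hia, hjb, Equiv.swap_apply_left, Equiv.swap_apply_right]
      exact iff_of_true (by rw [Fin.lt_def]; omega) ⟨rfl, rfl⟩
    · have hjbv : (j : ℕ) ≠ b := fun h => hjb (Fin.ext h)
      have hja : j ≠ a := fun h => by
        have := congrArg Fin.val h; omega
      rw [hia, Equiv.swap_apply_left, Equiv.swap_apply_of_ne_of_ne hja hjb]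
      exact iff_of_false (by rw [Fin.lt_def]; omega) (fun h => by have e2 := congrArg Fin.val h.2; omega)
  · have hiav : (i : ℕ) ≠ a := fun h => hia (Fin.ext h)
    rcases eq_or_ne j b with hjb | hjb
    · have hjbv : (j : ℕ) = b := congrArg Fin.val hjb
      have hib : i ≠ b := fun h => by
        have := congrArg Fin.val h; omega
      rw [hjb, Equiv.swap_apply_right, Equiv.swap_apply_of_ne_of_ne hia hib]
      exact iff_of_false (by rw [Fin.lt_def]; omega) (fun h => by have e1 := congrArg Fin.val h.1; omega)
    · have hjbv : (j : ℕ) ≠ b := fun h => hjb (Fin.ext h)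
      rcases eq_or_ne i b with hib | hib
      · have hibv : (i : ℕ) = b := congrArg Fin.val hib
        have hja : j ≠ a := fun h => by
          have := congrArg Fin.val h; omega
        rw [hib, Equiv.swap_apply_right, Equiv.swap_apply_of_ne_of_ne hja hjb]
        exact iff_of_false (by rw [Fin.lt_def]; omega) (fun h => by have e1 := congrArg Fin.val h.1; omega)
      · have hibv : (i : ℕ) ≠ b := fun h => hib (Fin.ext h)
        rcases eq_or_ne j a with hja | hja
        · have hjav : (j : ℕ) = a := congrArg Fin.val hja
          rw [hja, Equiv.swap_apply_left, Equiv.swap_apply_of_ne_of_ne hia hib]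
          exact iff_of_false (by rw [Fin.lt_def]; omega) (fun h => by have e1 := congrArg Fin.val h.1; omega)
        · rw [Equiv.swap_apply_of_ne_of_ne hia hib, Equiv.swap_apply_of_ne_of_ne hja hjb]
          exact iff_of_false (by rw [Fin.lt_def]; omega) (fun h => by have e1 := congrArg Fin.val h.1; omega)

lemma q_inv {a b : Fin n} (hrevab : Fin.rev a = b) :
    (Fin.revPerm * Equiv.swap a b)⁻¹ = Fin.revPerm * Equiv.swap a b := by
  have hrevba : Fin.rev b = a := by rw [← hrevab, Fin.rev_rev]
  refine Equiv.ext fun i => ?_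
  have hlhs : ((Fin.revPerm * Equiv.swap a b : Equiv.Perm (Fin n))⁻¹) i
      = Equiv.swap a b (Fin.rev i) := by
    rw [mul_inv_rev, Equiv.Perm.mul_apply, Equiv.swap_inv]
    congr 1
  rw [hlhs, Equiv.Perm.mul_apply, Fin.revPerm_apply]
  rcases eq_or_ne i a with rfl | hia
  · rw [hrevab, Equiv.swap_apply_right, Equiv.swap_apply_left, hrevba]
  · rcases eq_or_ne i b with rfl | hib
    · rw [hrevba, Equiv.swap_apply_left, Equiv.swap_apply_right, hrevab]
    · have h1 : Fin.rev i ≠ a := fun h => hib (by rw [← hrevab, ← h, Fin.rev_rev])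
      have h2 : Fin.rev i ≠ b := fun h => hia (by rw [← hrevba, ← h, Fin.rev_rev])
      rw [Equiv.swap_apply_of_ne_of_ne h1 h2, Equiv.swap_apply_of_ne_of_ne hia hib]

lemma structure_of_unique {p : Equiv.Perm (Fin n)} (hinv : p⁻¹ = p)
    (h : ∃! x : Fin n × Fin n, x.1 < x.2 ∧ p x.1 < p x.2) :
    ∃ a b : Fin n, (b : ℕ) = (a : ℕ) + 1 ∧ n = 2 * (a : ℕ) + 2 ∧
      p = Fin.revPerm * Equiv.swap a b := by
  obtain ⟨⟨a, b⟩, ⟨hab, hpab⟩, huniq⟩ := h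
  have hab' : a < b := hab
  have hpab' : p a < p b := hpab
  have hb := pos_adj hab' hpab' huniq
  have hpq : p = Fin.revPerm * Equiv.swap a b := by
    apply perm_eq_of_noninv_iff
    intro i j hij
    rw [q_noninv hb hij]
    constructor
    · intro h'
      have := huniq (i, j) ⟨hij, h'⟩
      rw [Prod.ext_iff] at this
      exact ⟨this.1, this.2⟩
    · rintro ⟨rfl, rfl⟩
      exact hpab'
  have h1 : p a = Fin.rev b := by
    rw [hpq, Equiv.Perm.mul_apply, Equiv.swap_apply_left, Fin.revPerm_apply]
  have h2 : p (p a) = a := by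
    nth_rewrite 1 [← hinv]
    exact p.symm_apply_apply a
  have h3 : p (Fin.rev b) = a := by rw [← h1]; exact h2
  have hvrev : (Fin.rev b : ℕ) = n - ((b : ℕ) + 1) := Fin.val_rev b
  have hbn : (b : ℕ) < n := b.isLt
  rcases eq_or_ne (Fin.rev b) a with hra | hra
  · have := congrArg Fin.val hra
    exact ⟨a, b, hb, by omega, hpq⟩
  · rcases eq_or_ne (Fin.rev b) b with hrb | hrb
    · rw [hrb] at h3
      rw [hpq, Equiv.Perm.mul_apply, Equiv.swap_apply_right, Fin.revPerm_apply] at h3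
      have hv1 := congrArg Fin.val h3
      have hv2 := congrArg Fin.val hrb
      have hvreva : (Fin.rev a : ℕ) = n - ((a : ℕ) + 1) := Fin.val_rev a
      have han : (a : ℕ) < n := a.isLt
      omega
    · rw [hpq, Equiv.Perm.mul_apply, Equiv.swap_apply_of_ne_of_ne hra hrb,
        Fin.revPerm_apply, Fin.rev_rev] at h3
      exact absurd (congrArg Fin.val h3) (by omega)

end I123

namespace I123

lemma q_mem_even {a b : Fin n} (hb : (b : ℕ) = (a : ℕ) + 1) (hnn : n = 2 * (a : ℕ) + 2) :
    (Fin.revPerm * Equiv.swap a b : Equiv.Perm (Fin n))⁻¹ = Fin.revPerm * Equiv.swap a b ∧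
    Avoids pattern123 (Fin.revPerm * Equiv.swap a b) ∧
    HasULIS ⇑(Fin.revPerm * Equiv.swap a b : Equiv.Perm (Fin n)) := by
  have hrevab : Fin.rev a = b := by
    apply Fin.ext
    rw [Fin.val_rev]; omega
  have hab : a < b := by rw [Fin.lt_def]; omega
  refine ⟨q_inv hrevab, ?_⟩
  apply ulis_backward
  refine ⟨(a, b), ⟨hab, (q_noninv hb hab).mpr ⟨rfl, rfl⟩⟩, ?_⟩
  rintro ⟨c, d⟩ ⟨hcd, h⟩
  obtain ⟨h1, h2⟩ := (q_noninv hb hcd).mp h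
  exact Prod.ext h1 h2

end I123


open I123 in
/-- `i_1(123) = 1`, `i_n(123) = 1` for even `n ≥ 2`, and `i_n(123) = 0` for odd
`n ≥ 3`. -/
theorem i123_values :
    iNum pattern123 1 = 1 ∧
    (∀ n : ℕ, 2 ≤ n → Even n → iNum pattern123 n = 1) ∧
    (∀ n : ℕ, 3 ≤ n → Odd n → iNum pattern123 n = 0) := by
  refine ⟨?_, ?_, ?_⟩
  · unfold iNum
    rw [Nat.card_eq_one_iff_unique]
    constructor
    · constructor
      rintro ⟨p, _⟩ ⟨q, _⟩
      exact Subtype.ext (Equiv.ext fun i => Subsingleton.elim _ _)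
    · refine ⟨⟨1, inv_one, ?_, ?_⟩⟩
      · rintro ⟨f, hf, -⟩
        have := hf (show (0 : Fin 3) < 1 by decide)
        rw [Subsingleton.elim (f 0) (f 1)] at this
        exact lt_irrefl _ this
      · refine ⟨{0}, ⟨?_, ?_⟩, ?_⟩
        · intro i _ j _ hij
          exact absurd (Subsingleton.elim i j) hij.ne
        · intro t _
          simpa using Finset.card_le_card t.subset_univ
        · rintro t ⟨-, hmax⟩
          have h1 : 1 ≤ t.card := by
            simpa using hmax {0} (fun i _ j _ hij => absurd (Subsingleton.elim i j) hij.ne)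
          have h2 : t.card ≤ 1 := by simpa using Finset.card_le_card t.subset_univ
          obtain ⟨x, rfl⟩ := Finset.card_eq_one.mp (le_antisymm h2 h1)
          rw [Subsingleton.elim x (0 : Fin 1)]
  · intro n hn he
    unfold iNum
    rw [Nat.card_eq_one_iff_unique]
    have ha' : n / 2 - 1 < n := by omega
    have hb' : n / 2 < n := by omega
    set a : Fin n := ⟨n / 2 - 1, ha'⟩ with hadef
    set b : Fin n := ⟨n / 2, hb'⟩ with hbdef
    have hb : (b : ℕ) = (a : ℕ) + 1 := by show n / 2 = n / 2 - 1 + 1; omega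
    have hnn : n = 2 * (a : ℕ) + 2 := by
      obtain ⟨m, hm⟩ := he
      show n = 2 * (n / 2 - 1) + 2
      omega
    constructor
    · constructor
      rintro ⟨p1, hp1inv, hp1av, hp1u⟩ ⟨p2, hp2inv, hp2av, hp2u⟩
      obtain ⟨a1, b1, hb1, hn1, hpq1⟩ :=
        structure_of_unique hp1inv (ulis_forward hn hp1av hp1u)
      obtain ⟨a2, b2, hb2, hn2, hpq2⟩ :=
        structure_of_unique hp2inv (ulis_forward hn hp2av hp2u)
      have he1 : a1 = a2 := Fin.ext (by omega)
      have he2 : b1 = b2 := Fin.ext (by omega)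
      subst he1; subst he2
      exact Subtype.ext (hpq1.trans hpq2.symm)
    · obtain ⟨hi, hav, hu⟩ := q_mem_even hb hnn
      exact ⟨⟨_, hi, hav, hu⟩⟩
  · intro n hn ho
    unfold iNum
    haveI : IsEmpty {p : Equiv.Perm (Fin n) // p⁻¹ = p ∧ Avoids pattern123 p ∧ HasULIS ⇑p} := by
      constructor
      rintro ⟨p, hpinv, hpav, hpu⟩
      obtain ⟨a, b, hb1, hn1, -⟩ :=
        structure_of_unique hpinv (ulis_forward (by omega) hpav hpu)
      obtain ⟨m, hm⟩ := ho
      omega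
    exact Nat.card_of_isEmpty
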